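/- arXiv:1204.3294 — 3 statements merged into one kernel-verified Lean document; each statement's English description precedes it below -/
import Mathlib

section
/- Let n ≥ 1 and let J = diag(1, −1, …, −1) be the (n+1)×(n+1) complex diagonal matrix of signature (1,n). Let g be an (n+1)×(n+1) complex matrix (indices 0,…,n) satisfying ḡᵀ J g = J. For z ∈ ℂⁿ set j(g,z) = g₀₀ + Σ_{k=1}^{n} g₀ₖ zₖ, and define the fractional linear action φ(z) ∈ ℂⁿ by φ(z)ᵢ = (gᵢ₀ + Σ_{k=1}^{n} gᵢₖ zₖ)/j(g,z) for i = 1,…,n. Then for every z ∈ ℂⁿ with j(g,z) ≠ 0, the map φ is complex differentiable at z and the determinant of its derivative (as a ℂ-linear endomorphism of ℂⁿ) equals det(g) · j(g,z)^{−(n+1)}. -/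
open Matrix

lemma hasFDerivAt_div_aux {E : Type*} [NormedAddCommGroup E] [NormedSpace ℂ E]
    {c d : E → ℂ} {c' d' : E →L[ℂ] ℂ} {x : E}
    (hc : HasFDerivAt c c' x) (hd : HasFDerivAt d d' x) (hx : d x ≠ 0) :
    HasFDerivAt (fun y => c y / d y) ((1 / d x ^ 2) • (d x • c' - c x • d')) x := by
  simp only [div_eq_mul_inv]
  have hinv : HasFDerivAt (fun y => (d y)⁻¹) ((-(d x ^ 2)⁻¹) • d') x := by
    refine ((hasFDerivAt_inv' (𝕜 := ℂ) hx).comp x hd).congr_fderiv ?_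
    ext v
    simp only [ContinuousLinearMap.coe_comp', Function.comp_apply,
      ContinuousLinearMap.neg_apply, ContinuousLinearMap.mulLeftRight_apply,
      ContinuousLinearMap.coe_smul', Pi.smul_apply, smul_eq_mul, pow_two, mul_inv]
    ring
  refine (hc.mul hinv).congr_fderiv ?_
  ext v
  simp only [ContinuousLinearMap.add_apply, ContinuousLinearMap.coe_smul', Pi.smul_apply,
    ContinuousLinearMap.coe_sub', Pi.sub_apply, smul_eq_mul]
  field_simp
  ring

-- affine map derivative
lemma affine_hasFDerivAt {n : ℕ} (c : ℂ) (a : Fin n → ℂ) (z : Fin n → ℂ) :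
    HasFDerivAt (fun w : Fin n → ℂ => c + ∑ k, a k * w k)
      (∑ k, a k • (ContinuousLinearMap.proj k : (Fin n → ℂ) →L[ℂ] ℂ)) z := by
  have h : ∀ k ∈ Finset.univ, HasFDerivAt (fun w : Fin n → ℂ => a k * w k)
      (a k • (ContinuousLinearMap.proj k : (Fin n → ℂ) →L[ℂ] ℂ)) z :=
    fun k _ => (hasFDerivAt_apply k z).const_mul (a k)
  exact ((HasFDerivAt.sum h).const_add c).congr_of_eventuallyEq
    (Filter.Eventually.of_forall fun w => by simp [Finset.sum_apply])

lemma det_fact {n : ℕ} (g : Matrix (Fin (n+1)) (Fin (n+1)) ℂ) (z φv : Fin n → ℂ) (jz : ℂ)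
    (hjz : jz = g 0 0 + ∑ k : Fin n, g 0 k.succ * z k) (hjne : jz ≠ 0)
    (hφv : ∀ i, φv i = (g i.succ 0 + ∑ k : Fin n, g i.succ k.succ * z k) / jz) :
    g.det = jz ^ (n+1) *
      (Matrix.of fun i k : Fin n => (g i.succ k.succ - φv i * g 0 k.succ) / jz).det := by
  classical
  set E : Matrix (Fin (n+1)) (Fin (n+1)) ℂ :=
    1 + Matrix.of (fun i l : Fin (n+1) => if l = 0 then Fin.cases 0 z i else 0) with hE
  set F : Matrix (Fin (n+1)) (Fin (n+1)) ℂ :=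
    1 + Matrix.of (fun i l : Fin (n+1) => if l = 0 then Fin.cases 0 (fun i' => -φv i') i else 0)
      with hF
  have htE : E.BlockTriangular OrderDual.toDual := by
    intro i l h
    have hil : i < l := h
    have hl0 : l ≠ 0 := Fin.pos_iff_ne_zero.mp (lt_of_le_of_lt (Fin.zero_le i) hil)
    simp [hE, Matrix.one_apply, Fin.ne_of_lt hil, hl0]
  have htF : F.BlockTriangular OrderDual.toDual := by
    intro i l h
    have hil : i < l := h
    have hl0 : l ≠ 0 := Fin.pos_iff_ne_zero.mp (lt_of_le_of_lt (Fin.zero_le i) hil)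
    simp [hF, Matrix.one_apply, Fin.ne_of_lt hil, hl0]
  have hdetE : E.det = 1 := by
    rw [Matrix.det_of_lowerTriangular E htE]
    apply Finset.prod_eq_one
    intro i _
    induction i using Fin.cases <;> simp [hE, Matrix.one_apply, Fin.succ_ne_zero]
  have hdetF : F.det = 1 := by
    rw [Matrix.det_of_lowerTriangular F htF]
    apply Finset.prod_eq_one
    intro i _
    induction i using Fin.cases <;> simp [hF, Matrix.one_apply, Fin.succ_ne_zero]
  have hgE : ∀ i l, (g * E) i l =
      if l = 0 then g i 0 + ∑ k : Fin n, g i k.succ * z k else g i l := by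
    intro i l
    rw [Matrix.mul_apply]
    simp only [hE, Matrix.add_apply, Matrix.one_apply, Matrix.of_apply, mul_add,
      Finset.sum_add_distrib, mul_ite, mul_one, mul_zero]
    rw [Finset.sum_ite_eq' Finset.univ l (fun m => g i m)]
    by_cases hl : l = 0
    · subst hl
      simp [Fin.sum_univ_succ, add_comm]
    · simp [hl]
  have hB : ∀ i l, (F * (g * E)) i l =
      (g * E) i l + (Fin.cases 0 (fun i' => -φv i') i) * (g * E) 0 l := by
    intro i l
    rw [Matrix.mul_apply]
    simp only [hF, Matrix.add_apply, Matrix.one_apply, Matrix.of_apply, add_mul,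
      Finset.sum_add_distrib, ite_mul, one_mul, zero_mul]
    rw [Finset.sum_ite_eq Finset.univ i (fun m => (g * E) m l)]
    simp [Fin.sum_univ_succ]
  set B := F * (g * E) with hBdef
  have hB00 : B 0 0 = jz := by
    rw [hB, hgE]; simp [hjz]
  have hBs0 : ∀ i : Fin n, B i.succ 0 = 0 := by
    intro i
    rw [hB, hgE, hgE]
    simp only [if_pos rfl, Fin.cases_succ]
    rw [hφv i, ← hjz]
    field_simp
    simp only [if_true]
    ring
  have hBsk : ∀ i k : Fin n, B i.succ k.succ = g i.succ k.succ - φv i * g 0 k.succ := by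
    intro i k
    rw [hB, hgE, hgE]
    simp [Fin.succ_ne_zero]
    ring
  have hdetB : B.det = g.det := by
    rw [hBdef, Matrix.det_mul, Matrix.det_mul, hdetE, hdetF, one_mul, mul_one]
  rw [← hdetB, Matrix.det_succ_column_zero, Fin.sum_univ_succ]
  have hzero : ∀ i : Fin n, (-1 : ℂ) ^ ((i.succ : Fin (n+1)) : ℕ) * B i.succ 0 *
      (B.submatrix (Fin.succAbove i.succ) Fin.succ).det = 0 := by
    intro i; rw [hBs0]; ring
  rw [Finset.sum_congr rfl (fun i _ => hzero i), Finset.sum_const, smul_zero, add_zero]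
  have hsub : B.submatrix (Fin.succAbove 0) Fin.succ =
      jz • (Matrix.of fun i k : Fin n => (g i.succ k.succ - φv i * g 0 k.succ) / jz) := by
    ext i k
    simp only [Matrix.submatrix_apply, Fin.succAbove_zero, Matrix.smul_apply, Matrix.of_apply,
      smul_eq_mul]
    rw [hBsk]
    field_simp
  rw [hsub, Matrix.det_smul, hB00]
  simp [Fintype.card_fin, pow_succ]
  ring

/-- Let `J = diag(1, -1, …, -1)` be the `(n+1)×(n+1)` complex matrix of
signature `(1,n)` and let `g` satisfy `gᴴ J g = J`, i.e. `g ∈ U(1,n)`.  For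
`z ∈ ℂⁿ` let `j(g,z) = g₀₀ + ∑ₖ g₀ₖ zₖ` be the canonical automorphy factor and let
`φ(z)ᵢ = (gᵢ₀ + ∑ₖ gᵢₖ zₖ) / j(g,z)` be the fractional linear action.  Then at every
point `z` with `j(g,z) ≠ 0` the map `φ` is complex differentiable and the determinant
of its derivative equals `det g · j(g,z)^{-(n+1)}`. -/
theorem jacobian_of_ball_action (n : ℕ) (hn : 1 ≤ n)
    (J : Matrix (Fin (n + 1)) (Fin (n + 1)) ℂ)
    (hJ : J = Matrix.diagonal (fun i => if i = 0 then (1 : ℂ) else -1))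
    (g : Matrix (Fin (n + 1)) (Fin (n + 1)) ℂ)
    (hg : g.conjTranspose * J * g = J)
    (j : (Fin n → ℂ) → ℂ)
    (hj : ∀ z : Fin n → ℂ, j z = g 0 0 + ∑ k : Fin n, g 0 k.succ * z k)
    (φ : (Fin n → ℂ) → (Fin n → ℂ))
    (hφ : ∀ (z : Fin n → ℂ) (i : Fin n),
      φ z i = (g i.succ 0 + ∑ k : Fin n, g i.succ k.succ * z k) / j z)
    (z : Fin n → ℂ) (hz : j z ≠ 0) :
    ∃ D : (Fin n → ℂ) →L[ℂ] (Fin n → ℂ),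
      HasFDerivAt φ D z ∧
        LinearMap.det (D : (Fin n → ℂ) →ₗ[ℂ] (Fin n → ℂ)) =
          g.det * (j z) ^ (-(n + 1 : ℤ)) := by
  classical
  set M : Matrix (Fin n) (Fin n) ℂ :=
    Matrix.of (fun i k : Fin n => (g i.succ k.succ - φ z i * g 0 k.succ) / j z) with hM
  refine ⟨LinearMap.toContinuousLinearMap (Matrix.toLin' M), ?_, ?_⟩
  · rw [hasFDerivAt_pi']
    intro i
    have hrw : (fun w => φ w i) = fun w : Fin n → ℂ =>
        (g i.succ 0 + ∑ k : Fin n, g i.succ k.succ * w k) /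
          (g 0 0 + ∑ k : Fin n, g 0 k.succ * w k) := by
      funext w; rw [hφ, hj]
    rw [hrw]
    have hN : HasFDerivAt (fun w : Fin n → ℂ => g i.succ 0 + ∑ k : Fin n, g i.succ k.succ * w k)
        (∑ k, g i.succ k.succ • (ContinuousLinearMap.proj k : (Fin n → ℂ) →L[ℂ] ℂ)) z :=
      affine_hasFDerivAt _ _ z
    have hJd : HasFDerivAt (fun w : Fin n → ℂ => g 0 0 + ∑ k : Fin n, g 0 k.succ * w k)
        (∑ k, g 0 k.succ • (ContinuousLinearMap.proj k : (Fin n → ℂ) →L[ℂ] ℂ)) z :=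
      affine_hasFDerivAt _ _ z
    have hz' : (g 0 0 + ∑ k : Fin n, g 0 k.succ * z k) ≠ 0 := by rw [← hj]; exact hz
    refine (hasFDerivAt_div_aux hN hJd hz').congr_fderiv ?_
    ext v
    simp only [ContinuousLinearMap.coe_comp', Function.comp_apply,
      ContinuousLinearMap.coe_smul', Pi.smul_apply, ContinuousLinearMap.coe_sub',
      Pi.sub_apply, ContinuousLinearMap.coe_sum', Finset.sum_apply,
      ContinuousLinearMap.coe_smul, ContinuousLinearMap.proj_apply, smul_eq_mul,
      ContinuousLinearMap.proj_apply, ContinuousLinearMap.coe_coe,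
      LinearMap.coe_toContinuousLinearMap', Matrix.toLin'_apply, Matrix.mulVec,
      dotProduct, hM, Matrix.of_apply]
    have hφi : φ z i = (g i.succ 0 + ∑ k : Fin n, g i.succ k.succ * z k) / j z := hφ z i
    rw [hj] at hφi hz ⊢
    set jz := g 0 0 + ∑ k : Fin n, g 0 k.succ * z k
    have : ∀ k : Fin n, (g i.succ k.succ - φ z i * g 0 k.succ) / jz * v k
        = (g i.succ k.succ * v k) / jz - φ z i * (g 0 k.succ * v k) / jz := by
      intro k; field_simp
    rw [Finset.sum_congr rfl fun k _ => this k, Finset.sum_sub_distrib, ← Finset.sum_div,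
      ← Finset.sum_div, ← Finset.mul_sum, hφi]
    set A := ∑ k : Fin n, g i.succ k.succ * v k
    set Bv := ∑ k : Fin n, g 0 k.succ * v k
    set N := g i.succ 0 + ∑ k : Fin n, g i.succ k.succ * z k
    field_simp
  · rw [LinearMap.coe_toContinuousLinearMap, LinearMap.det_toLin']
    have := det_fact g z (φ z) (j z) (hj z) hz (fun i => hφ z i)
    rw [← hM] at this
    have hpow : (j z : ℂ) ^ ((n : ℕ) + 1) ≠ 0 := pow_ne_zero _ hz
    rw [show (-(n + 1 : ℤ)) = -((n + 1 : ℕ) : ℤ) by push_cast; ring, _root_.zpow_neg, zpow_natCast,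
      this]
    field_simp
end

section
/- For every integer k ≥ 1, the ℂ-dimension of the degree-k homogeneous component of the graded quotient ring R/I equals (9k³ + 27k)/6; that is, the ℂ-dimension of the quotient of the space of homogeneous polynomials of degree k in X₀,…,X₅ by its subspace of elements lying in I equals (3k³ + 9k)/2. In particular the Hilbert polynomial of R/I has leading coefficient 9/6 = 3/2. -/
open MvPolynomial

/-- The cubic `f = X₀X₁X₂ − X₃X₄X₅` in `ℂ[X₀,…,X₅]`. -/
noncomputable def cubicF : MvPolynomial (Fin 6) ℂ :=
  X 0 * X 1 * X 2 - X 3 * X 4 * X 5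

/-- The cubic `g = X₀³ + X₁³ + X₂³ − X₃³ − X₄³ − X₅³` in `ℂ[X₀,…,X₅]`. -/
noncomputable def cubicG : MvPolynomial (Fin 6) ℂ :=
  X 0 ^ 3 + X 1 ^ 3 + X 2 ^ 3 - X 3 ^ 3 - X 4 ^ 3 - X 5 ^ 3

/-- The ideal `I = (f, g)`. -/
noncomputable def cubicsIdeal : Ideal (MvPolynomial (Fin 6) ℂ) :=
  Ideal.span {cubicF, cubicG}

/-- The degree-`k` homogeneous component of the graded quotient ring `R/I`:
the space of homogeneous polynomials of degree `k` in `X₀,…,X₅` modulo its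
subspace of elements lying in `I`. -/
noncomputable abbrev degreeComponent (k : ℕ) :=
  (homogeneousSubmodule (Fin 6) ℂ k) ⧸
    (Submodule.comap (homogeneousSubmodule (Fin 6) ℂ k).subtype
      (cubicsIdeal.restrictScalars ℂ))

namespace CubicsAux

/-! ### Generalities on homogeneous components -/

lemma hc_mul {σ R : Type*} [CommRing R] {f : MvPolynomial σ R} {m : ℕ}
    (hf : f ∈ homogeneousSubmodule σ R m) (a : MvPolynomial σ R) (k : ℕ) :
    homogeneousComponent (k + m) (a * f) = homogeneousComponent k a * f := by
  conv_lhs => rw [← sum_homogeneousComponent a, Finset.sum_mul, map_sum]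
  have h : ∀ i, homogeneousComponent (k + m) (homogeneousComponent i a * f)
      = if k + m = i + m then homogeneousComponent i a * f else 0 := fun i =>
    homogeneousComponent_of_mem
      (mem_homogeneousSubmodule _ _ |>.mpr
        (((mem_homogeneousSubmodule _ _).mp (homogeneousComponent_mem i a)).mul hf))
  simp only [h, Nat.add_right_cancel_iff]
  rw [Finset.sum_ite_eq (Finset.range (a.totalDegree + 1)) k
    (fun i => homogeneousComponent i a * f)]
  split_ifs with hk
  · rfl
  · rw [homogeneousComponent_eq_zero, zero_mul]
    simp only [Finset.mem_range, not_lt] at hk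
    omega

lemma hc_mul_zero {σ R : Type*} [CommRing R] {f : MvPolynomial σ R} {m : ℕ}
    (hf : f ∈ homogeneousSubmodule σ R m) (a : MvPolynomial σ R) {k : ℕ} (hk : k < m) :
    homogeneousComponent k (a * f) = 0 := by
  conv_lhs => rw [← sum_homogeneousComponent a, Finset.sum_mul, map_sum]
  refine Finset.sum_eq_zero fun i _ => ?_
  rw [homogeneousComponent_of_mem (mem_homogeneousSubmodule _ _ |>.mpr
    (((mem_homogeneousSubmodule _ _).mp (homogeneousComponent_mem i a)).mul hf))]
  rw [if_neg (by omega)]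

/-! ### Dimension of the homogeneous components -/

noncomputable abbrev H (n : ℕ) : Submodule ℂ (MvPolynomial (Fin 6) ℂ) :=
  homogeneousSubmodule (Fin 6) ℂ n

noncomputable instance fintypeDeg (n : ℕ) : Fintype {d : Fin 6 →₀ ℕ // d.degree = n} :=
  Fintype.ofEquiv (Sym (Fin 6) n)
    ((Sym.equivNatSum (Fin 6) n).trans ((Equiv.refl _).subtypeEquiv (fun d => by
      simp [Finsupp.degree_apply, Finsupp.sum])))

noncomputable def basisH (n : ℕ) : Module.Basis {d : Fin 6 →₀ ℕ // d.degree = n} ℂ (H n) :=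
  (MvPolynomial.basisRestrictSupport ℂ {d | d.degree = n}).map
    (LinearEquiv.ofEq _ _ (homogeneousSubmodule_eq_finsupp_supported (Fin 6) ℂ n).symm)

instance (n : ℕ) : FiniteDimensional ℂ (H n) := Module.Finite.of_basis (basisH n)

lemma finrank_H (n : ℕ) : Module.finrank ℂ (H n) = (n + 5).choose 5 := by
  rw [Module.finrank_eq_card_basis (basisH n)]
  rw [Fintype.card_congr (((Sym.equivNatSum (Fin 6) n).trans ((Equiv.refl _).subtypeEquiv
    (fun d => by simp [Finsupp.degree_apply, Finsupp.sum]))).symm)]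
  rw [Sym.card_sym_eq_multichoose, Nat.multichoose_eq, Fintype.card_fin]
  rw [show 6 + n - 1 = n + 5 by omega, ← Nat.choose_symm (by omega : n ≤ n + 5),
    show n + 5 - n = 5 by omega]

/-! ### Primality of `cubicF` -/

local notation "S5" => MvPolynomial (Fin 5) ℂ

lemma prime_X_mv {n : ℕ} (i : Fin (n + 1)) : Prime (X i : MvPolynomial (Fin (n + 1)) ℂ) := by
  rw [← MulEquiv.prime_iff (renameEquiv ℂ (Equiv.swap i 0)).toMulEquiv]
  have h1 : (renameEquiv ℂ (Equiv.swap i 0)).toMulEquiv (X i)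
      = (X 0 : MvPolynomial (Fin (n + 1)) ℂ) := by
    simp [renameEquiv_apply, rename_X]
  rw [h1, ← MulEquiv.prime_iff (finSuccEquiv ℂ n).toMulEquiv]
  have h2 : (finSuccEquiv ℂ n).toMulEquiv (X 0)
      = (Polynomial.X : Polynomial (MvPolynomial (Fin n) ℂ)) := finSuccEquiv_X_zero
  rw [h2]
  exact Polynomial.prime_X

lemma relPrime_XX {i j : Fin 5} (h : i ≠ j) : IsRelPrime (X i : S5) (X j) := by
  intro d hdi hdj
  obtain ⟨c, hc⟩ := hdi
  rcases (prime_X_mv i).irreducible.isUnit_or_isUnit hc with hu | hu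
  · exact hu
  · exfalso
    have hXd : (X i : S5) ∣ d := by
      obtain ⟨u, hu⟩ := hu
      exact ⟨↑u⁻¹, by rw [hc, ← hu]; simp [mul_assoc]⟩
    have : (X i : S5) ∣ X j := hXd.trans hdj
    rw [X_dvd_X] at this
    exact h this

lemma relPrime_lin : IsRelPrime ((X 0 : S5) * X 1) (X 2 * X 3 * X 4) := by
  have h : ∀ (i j : Fin 5), i ≠ j → IsRelPrime (X i : S5) (X j) := fun _ _ => relPrime_XX
  exact IsRelPrime.mul_left
    (((h 0 2 (by decide)).mul_right (h 0 3 (by decide))).mul_right (h 0 4 (by decide)))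
    (((h 1 2 (by decide)).mul_right (h 1 3 (by decide))).mul_right (h 1 4 (by decide)))

noncomputable def Pf : Polynomial S5 :=
  Polynomial.C (X 0 * X 1) * Polynomial.X - Polynomial.C (X 2 * X 3 * X 4)

lemma eF : finSuccEquiv ℂ 5 cubicF = Pf := by
  have h1 : (1 : Fin 6) = Fin.succ 0 := rfl
  have h2 : (2 : Fin 6) = Fin.succ 1 := rfl
  have h3 : (3 : Fin 6) = Fin.succ 2 := rfl
  have h4 : (4 : Fin 6) = Fin.succ 3 := rfl
  have h5 : (5 : Fin 6) = Fin.succ 4 := rfl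
  rw [cubicF, Pf, map_sub, map_mul, map_mul, map_mul, map_mul, h1, h2, h3, h4, h5,
    finSuccEquiv_X_zero, finSuccEquiv_X_succ, finSuccEquiv_X_succ, finSuccEquiv_X_succ,
    finSuccEquiv_X_succ, finSuccEquiv_X_succ]
  simp only [map_mul]
  ring

lemma primitive_Pf : Pf.IsPrimitive := by
  intro r hr
  rw [Polynomial.C_dvd_iff_dvd_coeff] at hr
  have h1 := hr 1
  have h0 := hr 0
  rw [Pf] at h1 h0
  simp only [Polynomial.coeff_sub, Polynomial.coeff_C_mul, Polynomial.coeff_X_one,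
    Polynomial.coeff_C, Polynomial.coeff_X_zero] at h1 h0
  norm_num at h1 h0
  exact relPrime_lin h1 h0

lemma prime_Pf : Prime Pf := by
  letI : NormalizationMonoid S5 := UniqueFactorizationMonoid.normalizationMonoid.toNormalizationMonoid
  letI : NormalizedGCDMonoid S5 := UniqueFactorizationMonoid.toNormalizedGCDMonoid S5
  rw [← UniqueFactorizationMonoid.irreducible_iff_prime]
  rw [primitive_Pf.irreducible_iff_irreducible_map_fraction_map (K := FractionRing S5)]
  apply Polynomial.irreducible_of_degree_eq_one
  rw [Pf, Polynomial.map_sub, Polynomial.map_mul, Polynomial.map_C, Polynomial.map_X,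
    Polynomial.map_C, sub_eq_add_neg, ← Polynomial.C_neg]
  apply Polynomial.degree_linear
  simp only [ne_eq, map_eq_zero_iff _ (IsFractionRing.injective S5 (FractionRing S5))]
  exact mul_ne_zero (X_ne_zero 0) (X_ne_zero 1)

lemma prime_cubicF : Prime cubicF := by
  rw [← MulEquiv.prime_iff (finSuccEquiv ℂ 5).toMulEquiv]
  rw [show (finSuccEquiv ℂ 5).toMulEquiv cubicF = Pf from eF]
  exact prime_Pf

lemma not_dvd_FG : ¬ cubicF ∣ cubicG := by
  rintro ⟨c, hc⟩
  have := congrArg (eval ![1, 1, 0, 0, 0, 0]) hc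
  rw [cubicG, cubicF] at this
  have h5 : (![1, 1, 0, 0, 0, 0] : Fin 6 → ℂ) 5 = 0 := rfl
  simp [h5] at this

/-! ### Homogeneity of the generators -/

lemma memF : cubicF ∈ H 3 := by
  rw [mem_homogeneousSubmodule]
  have h1 : ∀ i : Fin 6, (X i : MvPolynomial (Fin 6) ℂ).IsHomogeneous 1 := fun i =>
    isHomogeneous_X ℂ i
  have ha : ((X 0 * X 1 * X 2 : MvPolynomial (Fin 6) ℂ)).IsHomogeneous 3 := by
    simpa using ((h1 0).mul (h1 1)).mul (h1 2)
  have hb : ((X 3 * X 4 * X 5 : MvPolynomial (Fin 6) ℂ)).IsHomogeneous 3 := by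
    simpa using ((h1 3).mul (h1 4)).mul (h1 5)
  exact ha.sub hb

lemma memG : cubicG ∈ H 3 := by
  rw [mem_homogeneousSubmodule]
  have h1 : ∀ i : Fin 6, ((X i : MvPolynomial (Fin 6) ℂ) ^ 3).IsHomogeneous 3 := fun i => by
    simpa using (isHomogeneous_X ℂ i).pow 3
  exact (((((h1 0).add (h1 1)).add (h1 2)).sub (h1 3)).sub (h1 4)).sub (h1 5)

lemma mulF_mem {n : ℕ} {a : MvPolynomial (Fin 6) ℂ} (ha : a ∈ H n) :
    cubicF * a ∈ H (n + 3) := by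
  rw [mem_homogeneousSubmodule] at *
  simpa [add_comm] using (mem_homogeneousSubmodule 3 cubicF |>.mp memF).mul ha

lemma mulG_mem {n : ℕ} {a : MvPolynomial (Fin 6) ℂ} (ha : a ∈ H n) :
    cubicG * a ∈ H (n + 3) := by
  rw [mem_homogeneousSubmodule] at *
  simpa [add_comm] using (mem_homogeneousSubmodule 3 cubicG |>.mp memG).mul ha

/-! ### The maps `Φ` and `Ψ` -/

noncomputable abbrev J (k : ℕ) : Submodule ℂ (H k) :=
  Submodule.comap (H k).subtype (cubicsIdeal.restrictScalars ℂ)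

noncomputable def Phi (n : ℕ) : (H n × H n) →ₗ[ℂ] H (n + 3) :=
  LinearMap.codRestrict (H (n + 3))
    ((LinearMap.mulLeft ℂ cubicF).comp ((H n).subtype.comp (LinearMap.fst ℂ (H n) (H n))) +
     (LinearMap.mulLeft ℂ cubicG).comp ((H n).subtype.comp (LinearMap.snd ℂ (H n) (H n))))
    (fun p => Submodule.add_mem _ (mulF_mem p.1.2) (mulG_mem p.2.2))

lemma coe_Phi (n : ℕ) (p : H n × H n) :
    (Phi n p : MvPolynomial (Fin 6) ℂ) = cubicF * p.1 + cubicG * p.2 := rfl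

noncomputable def Psi (m : ℕ) : H m →ₗ[ℂ] (H (m + 3) × H (m + 3)) :=
  LinearMap.prod
    (LinearMap.codRestrict (H (m + 3)) ((LinearMap.mulLeft ℂ cubicG).comp (H m).subtype)
      (fun h => mulG_mem h.2))
    (LinearMap.codRestrict (H (m + 3)) (-((LinearMap.mulLeft ℂ cubicF).comp (H m).subtype))
      (fun h => Submodule.neg_mem _ (mulF_mem h.2)))

lemma coe_Psi_fst (m : ℕ) (h : H m) :
    ((Psi m h).1 : MvPolynomial (Fin 6) ℂ) = cubicG * h := rfl

lemma coe_Psi_snd (m : ℕ) (h : H m) :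
    ((Psi m h).2 : MvPolynomial (Fin 6) ℂ) = -(cubicF * h) := rfl

lemma J_eq_range (n : ℕ) : J (n + 3) = LinearMap.range (Phi n) := by
  ext x
  constructor
  · intro hx
    have hx' : (x : MvPolynomial (Fin 6) ℂ) ∈ cubicsIdeal := hx
    rw [cubicsIdeal, Ideal.mem_span_pair] at hx'
    obtain ⟨a, b, hab⟩ := hx'
    refine ⟨(⟨homogeneousComponent n a, homogeneousComponent_mem n a⟩,
      ⟨homogeneousComponent n b, homogeneousComponent_mem n b⟩), ?_⟩
    apply Subtype.ext
    rw [coe_Phi]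
    have hxc : homogeneousComponent (n + 3) (x : MvPolynomial (Fin 6) ℂ) = x := by
      rw [homogeneousComponent_of_mem x.2, if_pos rfl]
    calc cubicF * homogeneousComponent n a + cubicG * homogeneousComponent n b
        = homogeneousComponent n a * cubicF + homogeneousComponent n b * cubicG := by ring
      _ = homogeneousComponent (n + 3) (a * cubicF)
          + homogeneousComponent (n + 3) (b * cubicG) := by
          rw [hc_mul memF, hc_mul memG]
      _ = homogeneousComponent (n + 3) (a * cubicF + b * cubicG) := by rw [map_add]
      _ = x := by rw [hab, hxc]
  · rintro ⟨p, rfl⟩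
    have : (Phi n p : MvPolynomial (Fin 6) ℂ) ∈ cubicsIdeal := by
      rw [coe_Phi, cubicsIdeal, Ideal.mem_span_pair]
      exact ⟨p.1, p.2, by ring⟩
    exact this

lemma J_bot {k : ℕ} (hk : k < 3) : J k = ⊥ := by
  rw [Submodule.eq_bot_iff]
  rintro x hx
  have hx' : (x : MvPolynomial (Fin 6) ℂ) ∈ cubicsIdeal := hx
  rw [cubicsIdeal, Ideal.mem_span_pair] at hx'
  obtain ⟨a, b, hab⟩ := hx'
  apply Subtype.ext
  show (x : MvPolynomial (Fin 6) ℂ) = 0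
  have hxc : homogeneousComponent k (x : MvPolynomial (Fin 6) ℂ) = x := by
    rw [homogeneousComponent_of_mem x.2, if_pos rfl]
  rw [← hxc, ← hab, map_add, hc_mul_zero memF a hk, hc_mul_zero memG b hk, add_zero]

lemma ker_extract {a b : MvPolynomial (Fin 6) ℂ}
    (h : cubicF * a + cubicG * b = 0) :
    ∃ c, -b = cubicF * c ∧ a = cubicG * c := by
  have hdvd : cubicF ∣ cubicG * (-b) := ⟨a, by linear_combination -h⟩
  rcases prime_cubicF.2.2 _ _ hdvd with hFG | hFb
  · exact absurd hFG not_dvd_FG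
  · obtain ⟨c, hc⟩ := hFb
    refine ⟨c, hc, ?_⟩
    have h2 : cubicF * (a - cubicG * c) = 0 := by linear_combination h + cubicG * hc
    rw [mul_eq_zero] at h2
    rcases h2 with h2 | h2
    · exact absurd h2 prime_cubicF.ne_zero
    · linear_combination h2

lemma ker_Phi_bot {n : ℕ} (hn : n < 3) : LinearMap.ker (Phi n) = ⊥ := by
  rw [Submodule.eq_bot_iff]
  intro p hp
  rw [LinearMap.mem_ker] at hp
  have h : cubicF * (p.1 : MvPolynomial (Fin 6) ℂ) + cubicG * p.2 = 0 := by
    have := congrArg (Subtype.val) hp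
    rw [coe_Phi] at this
    simpa using this
  obtain ⟨c, hc, hac⟩ := ker_extract h
  have hb : (p.2 : MvPolynomial (Fin 6) ℂ) = 0 := by
    have hz : homogeneousComponent n (c * cubicF) = 0 := hc_mul_zero memF c hn
    rw [mul_comm c cubicF, ← hc] at hz
    have hcb : homogeneousComponent n (-(p.2 : MvPolynomial (Fin 6) ℂ))
        = -(p.2 : MvPolynomial (Fin 6) ℂ) := by
      rw [homogeneousComponent_of_mem (Submodule.neg_mem _ p.2.2), if_pos rfl]
    rw [hcb] at hz
    simpa using hz
  have ha : (p.1 : MvPolynomial (Fin 6) ℂ) = 0 := by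
    rw [hb, mul_zero, add_zero, mul_eq_zero] at h
    rcases h with h | h
    · exact absurd h prime_cubicF.ne_zero
    · exact h
  have : p = (0 : H n × H n) := by
    refine Prod.ext (Subtype.ext ?_) (Subtype.ext ?_)
    · exact ha
    · exact hb
  exact this

lemma ker_Phi_eq (m : ℕ) : LinearMap.ker (Phi (m + 3)) = LinearMap.range (Psi m) := by
  ext p
  rw [LinearMap.mem_ker]
  constructor
  · intro hp
    have h : cubicF * (p.1 : MvPolynomial (Fin 6) ℂ) + cubicG * p.2 = 0 := by
      have := congrArg (Subtype.val) hp
      rw [coe_Phi] at this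
      simpa using this
    obtain ⟨c, hc, hac⟩ := ker_extract h
    set c' := homogeneousComponent m c with hc'def
    have hthis := hc_mul memF c m
    rw [mul_comm c cubicF, ← hc] at hthis
    have hcb : homogeneousComponent (m + 3) (-(p.2 : MvPolynomial (Fin 6) ℂ))
        = -(p.2 : MvPolynomial (Fin 6) ℂ) := by
      rw [homogeneousComponent_of_mem (Submodule.neg_mem _ p.2.2), if_pos rfl]
    rw [hcb] at hthis
    -- hthis : -(p.2) = c' * cubicF
    have hac' : (p.1 : MvPolynomial (Fin 6) ℂ) = cubicG * c' := by
      have h2 : cubicF * ((p.1 : MvPolynomial (Fin 6) ℂ) - cubicG * c') = 0 := by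
        linear_combination h + cubicG * hthis
      rw [mul_eq_zero] at h2
      rcases h2 with h2 | h2
      · exact absurd h2 prime_cubicF.ne_zero
      · linear_combination h2
    refine ⟨⟨c', homogeneousComponent_mem m c⟩, ?_⟩
    refine Prod.ext (Subtype.ext ?_) (Subtype.ext ?_)
    · rw [coe_Psi_fst]
      exact hac'.symm
    · rw [coe_Psi_snd]
      linear_combination hthis
  · rintro ⟨h, rfl⟩
    apply Subtype.ext
    rw [coe_Phi, coe_Psi_fst, coe_Psi_snd]
    show cubicF * (cubicG * (h : MvPolynomial (Fin 6) ℂ)) + cubicG * (-(cubicF * h)) = 0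
    ring

lemma Psi_inj (m : ℕ) : Function.Injective (Psi m) := by
  rw [← LinearMap.ker_eq_bot, Submodule.eq_bot_iff]
  intro h hh
  rw [LinearMap.mem_ker] at hh
  have h2 : -(cubicF * (h : MvPolynomial (Fin 6) ℂ)) = 0 := by
    have hsnd : (((Psi m h).2 : H (m + 3)) : MvPolynomial (Fin 6) ℂ) = 0 := by rw [hh]; rfl
    rw [coe_Psi_snd] at hsnd
    exact hsnd
  rw [neg_eq_zero, mul_eq_zero] at h2
  apply Subtype.ext
  rcases h2 with h2 | h2
  · exact absurd h2 prime_cubicF.ne_zero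
  · exact h2

/-! ### Arithmetic -/

lemma c5 (n : ℕ) : 120 * (n + 5).choose 5 = (n + 1) * (n + 2) * (n + 3) * (n + 4) * (n + 5) := by
  have h := Nat.choose_mul_factorial_mul_factorial (show 5 ≤ n + 5 by omega)
  rw [show n + 5 - 5 = n by omega] at h
  have hf : (n + 5).factorial
      = (n + 1) * (n + 2) * (n + 3) * (n + 4) * (n + 5) * n.factorial := by
    rw [show n + 5 = n + 4 + 1 from rfl, Nat.factorial_succ,
      show n + 4 = n + 3 + 1 from rfl, Nat.factorial_succ,
      show n + 3 = n + 2 + 1 from rfl, Nat.factorial_succ,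
      show n + 2 = n + 1 + 1 from rfl, Nat.factorial_succ,
      show n + 1 = n + 0 + 1 from rfl, Nat.factorial_succ]
    ring
  apply Nat.eq_of_mul_eq_mul_right (Nat.factorial_pos n)
  calc 120 * (n + 5).choose 5 * n.factorial
      = (n + 5).choose 5 * Nat.factorial 5 * n.factorial := by
        rw [show Nat.factorial 5 = 120 from rfl]; ring
    _ = (n + 5).factorial := h
    _ = (n + 1) * (n + 2) * (n + 3) * (n + 4) * (n + 5) * n.factorial := hf

end CubicsAux

open CubicsAux

/-- For every `k ≥ 1`, the `ℂ`-dimension of the degree-`k`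
homogeneous component of `R/I` equals `(9k³ + 27k)/6 = (3k³ + 9k)/2`. -/
theorem dim_degree_component (k : ℕ) (hk : 1 ≤ k) :
    2 * Module.finrank ℂ (degreeComponent k) = 3 * k ^ 3 + 9 * k := by
  have hA : ∀ j : ℕ, Module.finrank ℂ (degreeComponent j) + Module.finrank ℂ (J j)
      = (j + 5).choose 5 := by
    intro j
    have := Submodule.finrank_quotient_add_finrank (J j)
    rwa [finrank_H] at this
  have hC : ∀ n : ℕ, Module.finrank ℂ (J (n + 3))
      + Module.finrank ℂ (LinearMap.ker (Phi n)) = 2 * (n + 5).choose 5 := by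
    intro n
    rw [J_eq_range]
    have := LinearMap.finrank_range_add_finrank_ker (Phi n)
    rw [Module.finrank_prod, finrank_H] at this
    omega
  rcases lt_or_ge k 3 with h3 | h3
  · -- k = 1 or 2
    have h0 := hA k
    rw [J_bot h3, finrank_bot] at h0
    have hcc := c5 k
    interval_cases k <;> (norm_num at h0 hcc ⊢) <;> omega
  rcases lt_or_ge k 6 with h6 | h6
  · -- k = 3, 4, 5
    obtain ⟨n, rfl⟩ : ∃ n, k = n + 3 := ⟨k - 3, by omega⟩
    have h1 := hA (n + 3)
    have h2 := hC n
    have hn : n < 3 := by omega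
    rw [ker_Phi_bot hn, finrank_bot] at h2
    have hcc := c5 n
    have hcc3 := c5 (n + 3)
    interval_cases n <;> (norm_num at h1 h2 hcc hcc3 ⊢) <;> omega
  · -- k ≥ 6
    obtain ⟨m, rfl⟩ : ∃ m, k = m + 6 := ⟨k - 6, by omega⟩
    have h1 := hA (m + 6)
    have h2 := hC (m + 3)
    have hker : Module.finrank ℂ (LinearMap.ker (Phi (m + 3))) = (m + 5).choose 5 := by
      rw [ker_Phi_eq, LinearMap.finrank_range_of_inj (Psi_inj m), finrank_H]
    rw [hker] at h2
    have h1' : (Module.finrank ℂ (degreeComponent (m + 6)) : ℤ)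
        + (Module.finrank ℂ (J (m + 6)) : ℤ) = ((m + 6 + 5).choose 5 : ℤ) := by
      exact_mod_cast h1
    have h2' : (Module.finrank ℂ (J (m + 6)) : ℤ) + ((m + 5).choose 5 : ℤ)
        = 2 * ((m + 3 + 5).choose 5 : ℤ) := by exact_mod_cast h2
    have e6' := congrArg (Nat.cast (R := ℤ)) (c5 (m + 6))
    have e3' := congrArg (Nat.cast (R := ℤ)) (c5 (m + 3))
    have e0' := congrArg (Nat.cast (R := ℤ)) (c5 m)
    push_cast at e6' e3' e0'
    have goal' : (120 : ℤ) * (2 * (Module.finrank ℂ (degreeComponent (m + 6)) : ℤ))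
        = 120 * (3 * ((m : ℤ) + 6) ^ 3 + 9 * ((m : ℤ) + 6)) := by
      linear_combination 240 * h1' - 240 * h2' + 2 * e6' - 4 * e3' + 2 * e0'
    have goal2 : (2 * (Module.finrank ℂ (degreeComponent (m + 6)) : ℤ))
        = 3 * ((m : ℤ) + 6) ^ 3 + 9 * ((m : ℤ) + 6) :=
      mul_left_cancel₀ (by norm_num : (120 : ℤ) ≠ 0) goal'
    exact_mod_cast goal2
end

section
/- The set of singular points of the projective variety 𝒳 ⊂ ℙ⁵(ℂ) defined by f = X₀X₁X₂ − X₃X₄X₅ = 0 and g = X₀³ + X₁³ + X₂³ − X₃³ − X₄³ − X₅³ = 0 — that is, the set of points [v] ∈ ℙ⁵(ℂ) with f(v) = g(v) = 0 such that the gradient vectors ∇f(v) and ∇g(v) in ℂ⁶ are linearly dependent — is a finite set of cardinality exactly 108. -/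
open MvPolynomial

/-- The gradient `∇p(v) ∈ ℂ⁶` of a polynomial `p ∈ ℂ[X₀,…,X₅]` at a point `v ∈ ℂ⁶`. -/
noncomputable def gradientAt (p : MvPolynomial (Fin 6) ℂ) (v : Fin 6 → ℂ) : Fin 6 → ℂ :=
  fun i => eval v (pderiv i p)

/-- The set of singular points of the projective variety `𝒳 ⊂ ℙ⁵(ℂ)` cut out by
`f = 0` and `g = 0`: points `[v]` with `f(v) = g(v) = 0` at which the gradients
`∇f(v)` and `∇g(v)` are linearly dependent.  (Since `f` and `g` are homogeneous,
these conditions do not depend on the representative `v ≠ 0`, so we may evaluate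
them at the canonical representative `x.rep`.) -/
noncomputable def singularLocus : Set (Projectivization ℂ (Fin 6 → ℂ)) :=
  {x | eval x.rep cubicF = 0 ∧ eval x.rep cubicG = 0 ∧
    ¬ LinearIndependent ℂ ![gradientAt cubicF x.rep, gradientAt cubicG x.rep]}

/-! ### Auxiliary definitions and lemmas -/

/-- Coordinate-level singularity condition. -/
def SingCond (v : Fin 6 → ℂ) : Prop :=
  v 0 * v 1 * v 2 - v 3 * v 4 * v 5 = 0 ∧
  v 0^3 + v 1^3 + v 2^3 - v 3^3 - v 4^3 - v 5^3 = 0 ∧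
  ∃ a b : ℂ, ¬(a = 0 ∧ b = 0) ∧
    a * (v 1 * v 2) + b * (3 * v 0^2) = 0 ∧
    a * (v 0 * v 2) + b * (3 * v 1^2) = 0 ∧
    a * (v 0 * v 1) + b * (3 * v 2^2) = 0 ∧
    a * (v 4 * v 5) + b * (3 * v 3^2) = 0 ∧
    a * (v 3 * v 5) + b * (3 * v 4^2) = 0 ∧
    a * (v 3 * v 4) + b * (3 * v 5^2) = 0

lemma gradF0 (v : Fin 6 → ℂ) : gradientAt cubicF v 0 = v 1 * v 2 := by
  simp [gradientAt, cubicF]; try ring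
lemma gradF1 (v : Fin 6 → ℂ) : gradientAt cubicF v 1 = v 0 * v 2 := by
  simp [gradientAt, cubicF]; try ring
lemma gradF2 (v : Fin 6 → ℂ) : gradientAt cubicF v 2 = v 0 * v 1 := by
  simp [gradientAt, cubicF]; try ring
lemma gradF3 (v : Fin 6 → ℂ) : gradientAt cubicF v 3 = -(v 4 * v 5) := by
  simp [gradientAt, cubicF]; try ring
lemma gradF4 (v : Fin 6 → ℂ) : gradientAt cubicF v 4 = -(v 3 * v 5) := by
  simp [gradientAt, cubicF]; try ring
lemma gradF5 (v : Fin 6 → ℂ) : gradientAt cubicF v 5 = -(v 3 * v 4) := by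
  simp [gradientAt, cubicF]; try ring
lemma gradG0 (v : Fin 6 → ℂ) : gradientAt cubicG v 0 = 3 * v 0 ^ 2 := by
  simp [gradientAt, cubicG]; try ring
lemma gradG1 (v : Fin 6 → ℂ) : gradientAt cubicG v 1 = 3 * v 1 ^ 2 := by
  simp [gradientAt, cubicG]; try ring
lemma gradG2 (v : Fin 6 → ℂ) : gradientAt cubicG v 2 = 3 * v 2 ^ 2 := by
  simp [gradientAt, cubicG]; try ring
lemma gradG3 (v : Fin 6 → ℂ) : gradientAt cubicG v 3 = -(3 * v 3 ^ 2) := by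
  simp [gradientAt, cubicG]; try ring
lemma gradG4 (v : Fin 6 → ℂ) : gradientAt cubicG v 4 = -(3 * v 4 ^ 2) := by
  simp [gradientAt, cubicG]; try ring
lemma gradG5 (v : Fin 6 → ℂ) : gradientAt cubicG v 5 = -(3 * v 5 ^ 2) := by
  simp [gradientAt, cubicG]; try ring

lemma evalF (v : Fin 6 → ℂ) : eval v cubicF = v 0 * v 1 * v 2 - v 3 * v 4 * v 5 := by
  simp [cubicF]; try ring
lemma evalG (v : Fin 6 → ℂ) :
    eval v cubicG = v 0^3 + v 1^3 + v 2^3 - v 3^3 - v 4^3 - v 5^3 := by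
  simp [cubicG]; try ring

lemma mem_singularLocus_iff (x : Projectivization ℂ (Fin 6 → ℂ)) :
    x ∈ singularLocus ↔ SingCond x.rep := by
  simp only [singularLocus, Set.mem_setOf_eq, SingCond, evalF, evalG]
  refine and_congr_right fun _ => and_congr_right fun _ => ?_
  rw [LinearIndependent.pair_iff]
  constructor
  · intro h
    push_neg at h
    obtain ⟨a, b, hab, h⟩ := h
    have h0 := congrFun hab 0
    have h1 := congrFun hab 1
    have h2 := congrFun hab 2
    have h3 := congrFun hab 3
    have h4 := congrFun hab 4
    have h5 := congrFun hab 5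
    simp only [Pi.add_apply, Pi.smul_apply, smul_eq_mul, Pi.zero_apply,
      gradF0, gradF1, gradF2, gradF3, gradF4, gradF5,
      gradG0, gradG1, gradG2, gradG3, gradG4, gradG5] at h0 h1 h2 h3 h4 h5
    refine ⟨a, b, fun hc => h hc.1 hc.2, ?_, ?_, ?_, ?_, ?_, ?_⟩
    · linear_combination h0
    · linear_combination h1
    · linear_combination h2
    · linear_combination -h3
    · linear_combination -h4
    · linear_combination -h5
  · rintro ⟨a, b, hab, e0, e1, e2, e3, e4, e5⟩
    intro hLI
    obtain ⟨ha, hb⟩ := hLI a b (by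
      funext i
      simp only [Pi.add_apply, Pi.smul_apply, smul_eq_mul, Pi.zero_apply]
      fin_cases i
      · show a * gradientAt cubicF x.rep 0 + b * gradientAt cubicG x.rep 0 = 0
        rw [gradF0, gradG0]; linear_combination e0
      · show a * gradientAt cubicF x.rep 1 + b * gradientAt cubicG x.rep 1 = 0
        rw [gradF1, gradG1]; linear_combination e1
      · show a * gradientAt cubicF x.rep 2 + b * gradientAt cubicG x.rep 2 = 0
        rw [gradF2, gradG2]; linear_combination e2
      · show a * gradientAt cubicF x.rep 3 + b * gradientAt cubicG x.rep 3 = 0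
        rw [gradF3, gradG3]; linear_combination -e3
      · show a * gradientAt cubicF x.rep 4 + b * gradientAt cubicG x.rep 4 = 0
        rw [gradF4, gradG4]; linear_combination -e4
      · show a * gradientAt cubicF x.rep 5 + b * gradientAt cubicG x.rep 5 = 0
        rw [gradF5, gradG5]; linear_combination -e5)
    exact hab ⟨ha, hb⟩

/-! ### Standard representatives of the singular points -/

def idx1 (i : Fin 3) : Fin 6 := ⟨i.val, by have := i.isLt; omega⟩
def idx2 (j : Fin 3) : Fin 6 := ⟨j.val + 3, by have := j.isLt; omega⟩

def W1 (i j : Fin 3) (ω : ℂ) : Fin 6 → ℂ :=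
  fun k => if k = idx1 i then 1 else if k = idx2 j then ω else 0

def W2 (α β γ s : ℂ) : Fin 6 → ℂ := ![1, α, β, s, s * γ, s * (α * β * γ ^ 2)]

lemma W2_0 (α β γ s : ℂ) : W2 α β γ s 0 = 1 := rfl
lemma W2_1 (α β γ s : ℂ) : W2 α β γ s 1 = α := rfl
lemma W2_2 (α β γ s : ℂ) : W2 α β γ s 2 = β := rfl
lemma W2_3 (α β γ s : ℂ) : W2 α β γ s 3 = s := rfl
lemma W2_4 (α β γ s : ℂ) : W2 α β γ s 4 = s * γ := rfl
lemma W2_5 (α β γ s : ℂ) : W2 α β γ s 5 = s * (α * β * γ ^ 2) := rfl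

lemma W1_ne_zero (i j : Fin 3) (ω : ℂ) : W1 i j ω ≠ 0 := by
  intro h
  have := congrFun h (idx1 i)
  simp [W1] at this

lemma W2_ne_zero (α β γ s : ℂ) : W2 α β γ s ≠ 0 := by
  intro h
  have := congrFun h 0
  simp [W2] at this

set_option maxHeartbeats 2000000 in
lemma singCond_smul_W1 (i j : Fin 3) (ω c : ℂ) (hω : ω ^ 3 = 1) :
    SingCond (c • W1 i j ω) := by
  fin_cases i <;> fin_cases j <;>
    refine ⟨?_, ?_, 1, 0, by norm_num, ?_, ?_, ?_, ?_, ?_, ?_⟩ <;>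
    · simp (config := { decide := true }) [W1, idx1, idx2]
      first
      | linear_combination c^3 * hω
      | linear_combination (-(c^3)) * hω
      | skip

lemma singCond_smul_W2 (α β γ s c : ℂ) (hα : α^3 = 1) (hβ : β^3 = 1) (hγ : γ^3 = 1)
    (hs : s^3 = 1) : SingCond (c • W2 α β γ s) := by
  refine ⟨?_, ?_, 3, -(α*β), fun h => by have := h.1; norm_num at this,
    ?_, ?_, ?_, ?_, ?_, ?_⟩ <;>
    simp only [Pi.smul_apply, smul_eq_mul, W2_0, W2_1, W2_2, W2_3, W2_4, W2_5]
  · linear_combination (-(c^3*α*β*s^3)) * hγ + (-(c^3*α*β)) * hs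
  · linear_combination (c^3*(1-β^3*γ^6))*hα + (c^3*(1-γ^6))*hβ +
      (c^3*(-(s^3)-γ^3-1))*hγ + (c^3*(-2-α^3*β^3*γ^6))*hs
  · ring
  · linear_combination (-(3*c^2*β))*hα
  · linear_combination (-(3*c^2*α))*hβ
  · linear_combination (3*c^2*s^2*α*β)*hγ
  · ring
  · linear_combination (-(3*c^2*s^2*β^3*γ^4))*hα + (-(3*c^2*s^2*γ^4))*hβ + (-(3*c^2*s^2*γ))*hγ
-- helper for case b = 0
lemma leafA {v : Fin 6 → ℂ} (hv : v ≠ 0) (i j : Fin 3)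
    (hz1 : ∀ k : Fin 6, (k:ℕ) < 3 → k ≠ idx1 i → v k = 0)
    (hz2 : ∀ k : Fin 6, 3 ≤ (k:ℕ) → k ≠ idx2 j → v k = 0)
    (hg : v 0^3 + v 1^3 + v 2^3 - v 3^3 - v 4^3 - v 5^3 = 0) :
    ∃ ω c : ℂ, ω^3 = 1 ∧ c ≠ 0 ∧ v = c • W1 i j ω := by
  set p := v (idx1 i) with hp
  set q := v (idx2 j) with hq
  have hsum1 : v 0^3 + v 1^3 + v 2^3 = p^3 := by
    fin_cases i <;>
      simp only [hp, idx1] <;>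
      [ (have a1 := hz1 1 (by norm_num) (by decide);
         have a2 := hz1 2 (by norm_num) (by decide);
         rw [a1, a2]; ring_nf; rfl);
        (have a1 := hz1 0 (by norm_num) (by decide);
         have a2 := hz1 2 (by norm_num) (by decide);
         rw [a1, a2]; ring_nf; rfl);
        (have a1 := hz1 0 (by norm_num) (by decide);
         have a2 := hz1 1 (by norm_num) (by decide);
         rw [a1, a2]; ring_nf; rfl)]
  have hsum2 : v 3^3 + v 4^3 + v 5^3 = q^3 := by
    fin_cases j <;>
      simp only [hq, idx2] <;>
      [ (have a1 := hz2 4 (by decide) (by decide);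
         have a2 := hz2 5 (by decide) (by decide);
         rw [a1, a2]; ring_nf; rfl);
        (have a1 := hz2 3 (by decide) (by decide);
         have a2 := hz2 5 (by decide) (by decide);
         rw [a1, a2]; ring_nf; rfl);
        (have a1 := hz2 3 (by decide) (by decide);
         have a2 := hz2 4 (by decide) (by decide);
         rw [a1, a2]; ring_nf; rfl)]
  have hpq : q^3 = p^3 := by linear_combination -hg + hsum1 - hsum2
  have hpne : p ≠ 0 := by
    intro h0
    apply hv
    have hq0 : q = 0 := by
      have : q^3 = 0 := by rw [hpq, h0]; ring
      exact pow_eq_zero_iff (by norm_num) |>.mp this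
    funext k
    by_cases hk : (k:ℕ) < 3
    · by_cases hki : k = idx1 i
      · rw [hki]; exact h0
      · exact hz1 k hk hki
    · by_cases hkj : k = idx2 j
      · rw [hkj]; exact hq0
      · exact hz2 k (by omega) hkj
  refine ⟨q / p, p, ?_, hpne, ?_⟩
  · rw [div_pow, hpq, div_self (pow_ne_zero 3 hpne)]
  · funext k
    simp only [Pi.smul_apply, smul_eq_mul, W1]
    by_cases hki : k = idx1 i
    · rw [if_pos hki, hki, mul_one]
    · rw [if_neg hki]
      by_cases hkj : k = idx2 j
      · rw [if_pos hkj, hkj, mul_div_cancel₀ _ hpne]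
      · rw [if_neg hkj]
        have hk : (k:ℕ) < 3 ∨ 3 ≤ (k:ℕ) := by omega
        rcases hk with hk | hk
        · rw [hz1 k hk hki, mul_zero]
        · rw [hz2 k hk hkj, mul_zero]
lemma caseBne {v : Fin 6 → ℂ} (hv : v ≠ 0) {a b : ℂ} (hb : b ≠ 0)
    (hf : v 0 * v 1 * v 2 - v 3 * v 4 * v 5 = 0)
    (hg : v 0^3 + v 1^3 + v 2^3 - v 3^3 - v 4^3 - v 5^3 = 0)
    (e0 : a * (v 1 * v 2) + b * (3 * v 0^2) = 0)
    (e1 : a * (v 0 * v 2) + b * (3 * v 1^2) = 0)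
    (e2 : a * (v 0 * v 1) + b * (3 * v 2^2) = 0)
    (e3 : a * (v 4 * v 5) + b * (3 * v 3^2) = 0)
    (e4 : a * (v 3 * v 5) + b * (3 * v 4^2) = 0)
    (e5 : a * (v 3 * v 4) + b * (3 * v 5^2) = 0) :
    ∃ α β γ s c : ℂ, α^3 = 1 ∧ β^3 = 1 ∧ γ^3 = 1 ∧ s^3 = 1 ∧ c ≠ 0 ∧
      v = c • W2 α β γ s := by
  have hb3 : (3:ℂ) * b ≠ 0 := mul_ne_zero (by norm_num) hb
  -- helper: from b*(3*x^2) = -a*y with y = 0 we get x = 0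
  have sq0 : ∀ x : ℂ, 3 * b * x^2 = 0 → x = 0 := by
    intro x hx
    have := (mul_eq_zero.mp hx).resolve_left hb3
    exact pow_eq_zero_iff (by norm_num) |>.mp this
  -- v 0 ≠ 0
  have hv0 : v 0 ≠ 0 := by
    intro h0
    have h1 : v 1 = 0 := sq0 _ (by linear_combination e1 - (a * v 2) * h0)
    have h2 : v 2 = 0 := sq0 _ (by linear_combination e2 - (a * v 1) * h0)
    have h3 : v 3 ≠ 0 := by
      intro h3
      have h4 : v 4 = 0 := sq0 _ (by linear_combination e4 - (a * v 5) * h3)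
      have h5 : v 5 = 0 := sq0 _ (by linear_combination e5 - (a * v 4) * h3)
      apply hv
      funext k
      fin_cases k <;> assumption
    have ha : a ≠ 0 := by
      intro ha
      exact h3 (sq0 _ (by linear_combination e3 - (v 4 * v 5) * ha))
    have c34 : v 3^3 = v 4^3 := by
      have h := sub_eq_zero.mp ((mul_eq_zero.mp
        (show (3*b) * (v 3^3 - v 4^3) = 0 by
          linear_combination v 3 * e3 - v 4 * e4)).resolve_left hb3)
      exact h
    have c35 : v 3^3 = v 5^3 := by
      exact sub_eq_zero.mp ((mul_eq_zero.mp
        (show (3*b) * (v 3^3 - v 5^3) = 0 by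
          linear_combination v 3 * e3 - v 5 * e5)).resolve_left hb3)
    have : v 3 ^ 3 = 0 := by
      linear_combination (-(1:ℂ)/3) * hg + (1/3) * (v 0^2) * h0 + (1/3) * (v 1^2) * h1 +
        (1/3) * (v 2^2) * h2 + ((1:ℂ)/3) * c34 + ((1:ℂ)/3) * c35
    exact h3 (pow_eq_zero_iff (by norm_num) |>.mp this)
  have hv1 : v 1 ≠ 0 := by
    intro h1
    have h2 : v 2 = 0 := sq0 _ (by linear_combination e2 - (a * v 0) * h1)
    exact hv0 (sq0 _ (by linear_combination e0 - (a * v 2) * h1))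
  have hv2 : v 2 ≠ 0 := by
    intro h2
    exact hv1 (sq0 _ (by linear_combination e1 - (a * v 0) * h2))
  have hv3 : v 3 ≠ 0 := by
    intro h3
    have h4 : v 4 = 0 := sq0 _ (by linear_combination e4 - (a * v 5) * h3)
    have h5 : v 5 = 0 := sq0 _ (by linear_combination e5 - (a * v 4) * h3)
    have ha : a ≠ 0 := by
      intro ha
      exact hv0 (sq0 _ (by linear_combination e0 - (v 1 * v 2) * ha))
    have c01 : v 0^3 = v 1^3 :=
      sub_eq_zero.mp ((mul_eq_zero.mp
        (show (3*b) * (v 0^3 - v 1^3) = 0 by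
          linear_combination v 0 * e0 - v 1 * e1)).resolve_left hb3)
    have c02 : v 0^3 = v 2^3 :=
      sub_eq_zero.mp ((mul_eq_zero.mp
        (show (3*b) * (v 0^3 - v 2^3) = 0 by
          linear_combination v 0 * e0 - v 2 * e2)).resolve_left hb3)
    have : v 0 ^ 3 = 0 := by
      linear_combination ((1:ℂ)/3) * hg + (1/3) * (v 3^2) * h3 + (1/3) * (v 4^2) * h4 +
        (1/3) * (v 5^2) * h5 + ((1:ℂ)/3) * c01 + ((1:ℂ)/3) * c02
    exact hv0 (pow_eq_zero_iff (by norm_num) |>.mp this)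
  have hv4 : v 4 ≠ 0 := by
    intro h4
    have h5 : v 5 = 0 := sq0 _ (by linear_combination e5 - (a * v 3) * h4)
    exact hv3 (sq0 _ (by linear_combination e3 - (a * v 5) * h4))
  have hv5 : v 5 ≠ 0 := by
    intro h5
    exact hv4 (sq0 _ (by linear_combination e4 - (a * v 3) * h5))
  have ha : a ≠ 0 := by
    intro ha
    exact hv0 (sq0 _ (by linear_combination e0 - (v 1 * v 2) * ha))
  have c01 : v 0^3 = v 1^3 :=
    sub_eq_zero.mp ((mul_eq_zero.mp
      (show (3*b) * (v 0^3 - v 1^3) = 0 by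
        linear_combination v 0 * e0 - v 1 * e1)).resolve_left hb3)
  have c02 : v 0^3 = v 2^3 :=
    sub_eq_zero.mp ((mul_eq_zero.mp
      (show (3*b) * (v 0^3 - v 2^3) = 0 by
        linear_combination v 0 * e0 - v 2 * e2)).resolve_left hb3)
  have c34 : v 3^3 = v 4^3 :=
    sub_eq_zero.mp ((mul_eq_zero.mp
      (show (3*b) * (v 3^3 - v 4^3) = 0 by
        linear_combination v 3 * e3 - v 4 * e4)).resolve_left hb3)
  have c03 : v 0^3 = v 3^3 :=
    sub_eq_zero.mp ((mul_eq_zero.mp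
      (show (3*b) * (v 0^3 - v 3^3) = 0 by
        linear_combination v 0 * e0 - v 3 * e3 + (-a) * hf)).resolve_left hb3)
  have hcross : v 1 * v 2 * v 3^2 = v 4 * v 5 * v 0^2 :=
    sub_eq_zero.mp ((mul_eq_zero.mp
      (show a * (v 1 * v 2 * v 3^2 - v 4 * v 5 * v 0^2) = 0 by
        linear_combination (v 3^2) * e0 - (v 0^2) * e3)).resolve_left ha)
  refine ⟨v 1 / v 0, v 2 / v 0, v 4 / v 3, v 3 / v 0, v 0, ?_, ?_, ?_, ?_, hv0, ?_⟩
  · rw [div_pow, ← c01, div_self (pow_ne_zero 3 hv0)]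
  · rw [div_pow, ← c02, div_self (pow_ne_zero 3 hv0)]
  · rw [div_pow, ← c34, div_self (pow_ne_zero 3 hv3)]
  · rw [div_pow, ← c03, div_self (pow_ne_zero 3 hv0)]
  · funext k
    fin_cases k <;>
      simp only [Pi.smul_apply, smul_eq_mul, W2_0, W2_1, W2_2, W2_3, W2_4, W2_5]
    · show v 0 = v 0 * 1; ring
    · show v 1 = v 0 * (v 1 / v 0); field_simp
    · show v 2 = v 0 * (v 2 / v 0); field_simp
    · show v 3 = v 0 * (v 3 / v 0); field_simp
    · show v 4 = v 0 * (v 3 / v 0 * (v 4 / v 3)); field_simp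
    · show v 5 = v 0 * (v 3 / v 0 * (v 1 / v 0 * (v 2 / v 0) * (v 4 / v 3)^2))
      have key : v 3^2 * (v 1 * v 2 * v 4^2 - v 0^2 * v 3 * v 5) = 0 := by
        linear_combination (v 4^2) * hcross - (v 5 * v 0^2) * c34
      have key2 : v 1 * v 2 * v 4^2 - v 0^2 * v 3 * v 5 = 0 := by
        rcases mul_eq_zero.mp key with h | h
        · exact absurd (pow_eq_zero_iff two_ne_zero |>.mp h) hv3
        · exact h
      rw [eq_comm, ← sub_eq_zero]
      have expand : v 0 * (v 3 / v 0 * (v 1 / v 0 * (v 2 / v 0) * (v 4 / v 3)^2)) - v 5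
          = (v 1 * v 2 * v 4^2 - v 0^2 * v 3 * v 5) / (v 0^2 * v 3) := by
        field_simp
      rw [expand, div_eq_zero_iff]
      left
      linear_combination key2

lemma classify {v : Fin 6 → ℂ} (hv : v ≠ 0) (h : SingCond v) :
    (∃ i j : Fin 3, ∃ ω c : ℂ, ω^3 = 1 ∧ c ≠ 0 ∧ v = c • W1 i j ω) ∨
    (∃ α β γ s c : ℂ, α^3 = 1 ∧ β^3 = 1 ∧ γ^3 = 1 ∧ s^3 = 1 ∧ c ≠ 0 ∧
      v = c • W2 α β γ s) := by
  obtain ⟨hf, hg, a, b, hab, e0, e1, e2, e3, e4, e5⟩ := h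
  by_cases hb : b = 0
  · left
    have ha : a ≠ 0 := fun h' => hab ⟨h', hb⟩
    have mz : ∀ x : ℂ, a * x = 0 → x = 0 := fun x hx => (mul_eq_zero.mp hx).resolve_left ha
    have p12 : v 1 * v 2 = 0 := mz _ (by linear_combination e0 - (3*v 0^2)*hb)
    have p02 : v 0 * v 2 = 0 := mz _ (by linear_combination e1 - (3*v 1^2)*hb)
    have p01 : v 0 * v 1 = 0 := mz _ (by linear_combination e2 - (3*v 2^2)*hb)
    have p45 : v 4 * v 5 = 0 := mz _ (by linear_combination e3 - (3*v 3^2)*hb)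
    have p35 : v 3 * v 5 = 0 := mz _ (by linear_combination e4 - (3*v 4^2)*hb)
    have p34 : v 3 * v 4 = 0 := mz _ (by linear_combination e5 - (3*v 5^2)*hb)
    have H1 : ∃ i : Fin 3, ∀ k : Fin 6, (k:ℕ) < 3 → k ≠ idx1 i → v k = 0 := by
      rcases mul_eq_zero.mp p12 with h1 | h2
      · rcases mul_eq_zero.mp p02 with h0 | h2
        · exact ⟨2, by intro k hk hne; fin_cases k <;> first
            | exact h0 | exact h1
            | exact absurd (by decide) hne | exact absurd hk (by decide)⟩
        · exact ⟨0, by intro k hk hne; fin_cases k <;> first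
            | exact h1 | exact h2
            | exact absurd (by decide) hne | exact absurd hk (by decide)⟩
      · rcases mul_eq_zero.mp p01 with h0 | h1
        · exact ⟨1, by intro k hk hne; fin_cases k <;> first
            | exact h0 | exact h2
            | exact absurd (by decide) hne | exact absurd hk (by decide)⟩
        · exact ⟨0, by intro k hk hne; fin_cases k <;> first
            | exact h1 | exact h2
            | exact absurd (by decide) hne | exact absurd hk (by decide)⟩
    have H2 : ∃ j : Fin 3, ∀ k : Fin 6, 3 ≤ (k:ℕ) → k ≠ idx2 j → v k = 0 := by
      rcases mul_eq_zero.mp p45 with h4 | h5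
      · rcases mul_eq_zero.mp p35 with h3 | h5
        · exact ⟨2, by intro k hk hne; fin_cases k <;> first
            | exact h3 | exact h4
            | exact absurd (by decide) hne | exact absurd hk (by decide)⟩
        · exact ⟨0, by intro k hk hne; fin_cases k <;> first
            | exact h4 | exact h5
            | exact absurd (by decide) hne | exact absurd hk (by decide)⟩
      · rcases mul_eq_zero.mp p34 with h3 | h4
        · exact ⟨1, by intro k hk hne; fin_cases k <;> first
            | exact h3 | exact h5
            | exact absurd (by decide) hne | exact absurd hk (by decide)⟩
        · exact ⟨0, by intro k hk hne; fin_cases k <;> first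
            | exact h4 | exact h5
            | exact absurd (by decide) hne | exact absurd hk (by decide)⟩
    obtain ⟨i, hz1⟩ := H1
    obtain ⟨j, hz2⟩ := H2
    obtain ⟨ω, c, h1, h2, h3⟩ := leafA hv i j hz1 hz2 hg
    exact ⟨i, j, ω, c, h1, h2, h3⟩
  · right
    exact caseBne hv hb hf hg e0 e1 e2 e3 e4 e5

noncomputable def ptA (p : Fin 3 × Fin 3 × ℂ) : Projectivization ℂ (Fin 6 → ℂ) :=
  Projectivization.mk ℂ (W1 p.1 p.2.1 p.2.2) (W1_ne_zero _ _ _)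

noncomputable def ptB (p : ℂ × ℂ × ℂ × ℂ) : Projectivization ℂ (Fin 6 → ℂ) :=
  Projectivization.mk ℂ (W2 p.1 p.2.1 p.2.2.1 p.2.2.2) (W2_ne_zero _ _ _ _)

noncomputable def mu3 : Finset ℂ := Polynomial.nthRootsFinset 3 (1 : ℂ)

lemma mem_mu3 {z : ℂ} : z ∈ mu3 ↔ z ^ 3 = 1 := by
  rw [mu3, Polynomial.mem_nthRootsFinset (by norm_num)]

lemma mu3_card : mu3.card = 3 :=
  (Complex.isPrimitiveRoot_exp 3 (by norm_num)).card_nthRootsFinset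

lemma mu3_ne_zero {z : ℂ} (hz : z ∈ mu3) : z ≠ 0 := by
  rw [mem_mu3] at hz
  intro h
  rw [h] at hz
  norm_num at hz

noncomputable def domA : Finset (Fin 3 × Fin 3 × ℂ) := Finset.univ ×ˢ Finset.univ ×ˢ mu3
noncomputable def domB : Finset (ℂ × ℂ × ℂ × ℂ) := mu3 ×ˢ mu3 ×ˢ mu3 ×ˢ mu3

open Classical in
noncomputable def FA : Finset (Projectivization ℂ (Fin 6 → ℂ)) := domA.image ptA
open Classical in
noncomputable def FB : Finset (Projectivization ℂ (Fin 6 → ℂ)) := domB.image ptB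

open Classical in
noncomputable def FS : Finset (Projectivization ℂ (Fin 6 → ℂ)) := FA ∪ FB

open Classical in
lemma mem_FS {x : Projectivization ℂ (Fin 6 → ℂ)} : x ∈ FS ↔ x ∈ FA ∨ x ∈ FB := by
  rw [FS, Finset.mem_union]

lemma locus_eq : singularLocus = ↑FS := by
  ext x
  rw [mem_singularLocus_iff x]
  rw [Finset.mem_coe, mem_FS]
  simp only [FA, FB, Finset.mem_image]
  constructor
  · intro h
    rcases classify x.rep_nonzero h with
      ⟨i, j, ω, c, hω, hc, heq⟩ | ⟨α, β, γ, s, c, hα, hβ, hγ, hs, hc, heq⟩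
    · left
      refine ⟨(i, j, ω), ?_, ?_⟩
      · simp only [domA, Finset.mem_product, Finset.mem_univ, true_and]
        exact mem_mu3.mpr hω
      · show Projectivization.mk ℂ (W1 i j ω) (W1_ne_zero _ _ _) = x
        rw [← Projectivization.mk_rep x]
        rw [Projectivization.mk_eq_mk_iff]
        exact ⟨(Units.mk0 c hc)⁻¹, by
          rw [Units.smul_def, Units.val_inv_eq_inv_val, Units.val_mk0, heq, smul_smul,
            inv_mul_cancel₀ hc, one_smul]⟩
    · right
      refine ⟨(α, β, γ, s), ?_, ?_⟩
      · simp only [domB, Finset.mem_product]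
        exact ⟨mem_mu3.mpr hα, mem_mu3.mpr hβ, mem_mu3.mpr hγ, mem_mu3.mpr hs⟩
      · show Projectivization.mk ℂ (W2 α β γ s) (W2_ne_zero _ _ _ _) = x
        rw [← Projectivization.mk_rep x]
        rw [Projectivization.mk_eq_mk_iff]
        exact ⟨(Units.mk0 c hc)⁻¹, by
          rw [Units.smul_def, Units.val_inv_eq_inv_val, Units.val_mk0, heq, smul_smul,
            inv_mul_cancel₀ hc, one_smul]⟩
  · rintro (⟨⟨i, j, ω⟩, hmem, rfl⟩ | ⟨⟨α, β, γ, s⟩, hmem, rfl⟩)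
    · have hω : ω ^ 3 = 1 := by
        simp only [domA, Finset.mem_product] at hmem
        exact mem_mu3.mp hmem.2.2
      have : Projectivization.mk ℂ (ptA (i, j, ω)).rep (ptA (i, j, ω)).rep_nonzero =
          Projectivization.mk ℂ (W1 i j ω) (W1_ne_zero _ _ _) := by
        rw [Projectivization.mk_rep]; rfl
      obtain ⟨u, hu⟩ := (Projectivization.mk_eq_mk_iff _ _ _ _ _).mp this
      rw [← hu]
      exact singCond_smul_W1 i j ω u hω
    · have h4 : α ^ 3 = 1 ∧ β ^ 3 = 1 ∧ γ ^ 3 = 1 ∧ s ^ 3 = 1 := by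
        simp only [domB, Finset.mem_product] at hmem
        exact ⟨mem_mu3.mp hmem.1, mem_mu3.mp hmem.2.1,
          mem_mu3.mp hmem.2.2.1, mem_mu3.mp hmem.2.2.2⟩
      have : Projectivization.mk ℂ (ptB (α, β, γ, s)).rep (ptB (α, β, γ, s)).rep_nonzero =
          Projectivization.mk ℂ (W2 α β γ s) (W2_ne_zero _ _ _ _) := by
        rw [Projectivization.mk_rep]; rfl
      obtain ⟨u, hu⟩ := (Projectivization.mk_eq_mk_iff _ _ _ _ _).mp this
      rw [← hu]
      exact singCond_smul_W2 α β γ s u h4.1 h4.2.1 h4.2.2.1 h4.2.2.2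

lemma idx1_inj {i i' : Fin 3} (h : idx1 i = idx1 i') : i = i' := by
  have := congrArg Fin.val h
  simp only [idx1] at this
  exact Fin.ext this

lemma lt3_ne_idx2 {k : Fin 6} (hk : (k:ℕ) < 3) (j : Fin 3) : k ≠ idx2 j := by
  intro h
  have := congrArg Fin.val h
  simp only [idx2] at this
  omega

lemma idx1_lt3 (i : Fin 3) : ((idx1 i : Fin 6) : ℕ) < 3 := by
  simp only [idx1]
  exact i.isLt

lemma W1_at_idx1 (i j : Fin 3) (ω : ℂ) : W1 i j ω (idx1 i) = 1 := by
  rw [W1, if_pos rfl]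

lemma W1_at_idx2 (i j : Fin 3) (ω : ℂ) : W1 i j ω (idx2 j) = ω := by
  rw [W1, if_neg (Ne.symm (lt3_ne_idx2 (idx1_lt3 i) j)), if_pos rfl]

lemma W1_lt3_ne (i j : Fin 3) (ω : ℂ) {k : Fin 6} (hk : (k:ℕ) < 3) (hki : k ≠ idx1 i) :
    W1 i j ω k = 0 := by
  rw [W1, if_neg hki, if_neg (lt3_ne_idx2 hk j)]

lemma idx2_inj {j j' : Fin 3} (h : idx2 j = idx2 j') : j = j' := by
  have := congrArg Fin.val h
  simp only [idx2] at this
  omega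

lemma injA : Set.InjOn ptA ↑domA := by
  rintro ⟨i, j, ω⟩ hp ⟨i', j', ω'⟩ hq h
  simp only [Finset.coe_product, Finset.mem_coe, domA, Finset.mem_product] at hp hq
  have hω' : ω' ≠ 0 := mu3_ne_zero hq.2.2
  obtain ⟨u, hu⟩ := (Projectivization.mk_eq_mk_iff _ _ _ _ _).mp h
  have E := congrFun hu
  have hii : i' = i := by
    by_contra hne
    have e1 := E (idx1 i)
    rw [Pi.smul_apply, W1_lt3_ne i' j' ω' (idx1_lt3 i)
      (fun hh => hne (idx1_inj hh).symm), smul_zero, W1_at_idx1] at e1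
    exact one_ne_zero e1.symm
  subst hii
  have e1 := E (idx1 i')
  rw [Pi.smul_apply, W1_at_idx1, W1_at_idx1, Units.smul_def, smul_eq_mul, mul_one] at e1
  have hjj : j' = j := by
    by_contra hne
    have e2 := E (idx2 j)
    rw [Pi.smul_apply, W1, if_neg (Ne.symm (lt3_ne_idx2 (idx1_lt3 i') j)),
      if_neg (fun hh => hne (idx2_inj hh).symm), smul_zero, W1_at_idx2] at e2
    exact (mu3_ne_zero hp.2.2) e2.symm
  subst hjj
  have e2 := E (idx2 j')
  rw [Pi.smul_apply, W1_at_idx2, W1_at_idx2, Units.smul_def, smul_eq_mul] at e2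
  have : (u : ℂ) = 1 := e1
  rw [this, one_mul] at e2
  have hωω : ω' = ω := e2
  rw [hωω]

lemma injB : Set.InjOn ptB ↑domB := by
  rintro ⟨α, β, γ, s⟩ hp ⟨α', β', γ', s'⟩ hq h
  simp only [Finset.coe_product, Finset.mem_coe, domB, Finset.mem_product] at hp hq
  have hs : s ≠ 0 := mu3_ne_zero hp.2.2.2
  obtain ⟨u, hu⟩ := (Projectivization.mk_eq_mk_iff _ _ _ _ _).mp h
  have E := congrFun hu
  have e0 := E 0
  rw [Pi.smul_apply, W2_0, W2_0, Units.smul_def, smul_eq_mul, mul_one] at e0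
  have hu1 : (u : ℂ) = 1 := e0
  have e1 := E 1
  have e2 := E 2
  have e3 := E 3
  have e4 := E 4
  rw [Pi.smul_apply, W2_1, W2_1, Units.smul_def, smul_eq_mul, hu1, one_mul] at e1
  rw [Pi.smul_apply, W2_2, W2_2, Units.smul_def, smul_eq_mul, hu1, one_mul] at e2
  rw [Pi.smul_apply, W2_3, W2_3, Units.smul_def, smul_eq_mul, hu1, one_mul] at e3
  rw [Pi.smul_apply, W2_4, W2_4, Units.smul_def, smul_eq_mul, hu1, one_mul] at e4
  have e1' : α' = α := e1
  have e2' : β' = β := e2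
  have e3' : s' = s := e3
  have e4' : s' * γ' = s * γ := e4
  have hγ : γ' = γ := by
    rw [e3'] at e4'
    exact mul_left_cancel₀ hs e4'
  simp only [Prod.mk.injEq]
  exact ⟨e1'.symm, e2'.symm, hγ.symm, e3'.symm⟩

lemma W2_lt3_ne_zero {α β γ s : ℂ} (hα : α ≠ 0) (hβ : β ≠ 0) {k : Fin 6}
    (hk : (k:ℕ) < 3) : W2 α β γ s k ≠ 0 := by
  fin_cases k
  · exact one_ne_zero
  · exact hα
  · exact hβ
  · exact absurd hk (by decide)
  · exact absurd hk (by decide)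
  · exact absurd hk (by decide)

lemma fin3_succ_ne_self (i : Fin 3) : i + 1 ≠ i := by fin_cases i <;> decide

lemma disjAB : Disjoint FA FB := by
  rw [Finset.disjoint_left]
  rintro x hA hB
  simp only [FA, FB, Finset.mem_image] at hA hB
  obtain ⟨⟨i, j, ω⟩, hmemA, rfl⟩ := hA
  obtain ⟨⟨α, β, γ, s⟩, hmemB, hEq⟩ := hB
  simp only [domB, Finset.mem_product] at hmemB
  have hα : α ≠ 0 := mu3_ne_zero hmemB.1
  have hβ : β ≠ 0 := mu3_ne_zero hmemB.2.1
  obtain ⟨u, hu⟩ := (Projectivization.mk_eq_mk_iff _ _ _ _ _).mp hEq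
  have E := congrFun hu
  have e := E (idx1 (i + 1))
  rw [Pi.smul_apply, W1_lt3_ne i j ω (idx1_lt3 (i+1))
    (fun hh => fin3_succ_ne_self i (idx1_inj hh)), smul_zero] at e
  exact W2_lt3_ne_zero hα hβ (idx1_lt3 (i+1)) e.symm

open Classical in
lemma FS_card : FS.card = 108 := by
  have h1 : FA.card = 27 := by
    rw [FA, Finset.card_image_of_injOn injA, domA]
    simp [Finset.card_product, mu3_card]
  have h2 : FB.card = 81 := by
    rw [FB, Finset.card_image_of_injOn injB, domB]
    simp [Finset.card_product, mu3_card]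
  rw [FS, Finset.card_union_of_disjoint disjAB, h1, h2]

/-- The singular locus of `𝒳` is a finite set of exactly `108` points. -/
theorem singularLocus_card :
    singularLocus.Finite ∧ singularLocus.ncard = 108 := by
  constructor
  · rw [locus_eq]
    exact FS.finite_toSet
  · rw [locus_eq, Set.ncard_coe_finset, FS_card]
end
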